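/- The number of rooted compositions of Dyck paths of length 2i (compositions (P_1,...,P_j) of a Dyck path into nonempty Dyck segments, together with a choice of one distinguished segment) equals 4^{i-1}. -/

import Mathlib

/-- Height change of a Dyck step (`true` = up, `false` = down). -/
def dval (b : Bool) : ℤ := if b then 1 else -1

/-- The final height of a Dyck-step word. -/
def dsum (l : List Bool) : ℤ := (l.map dval).sum

/-- A Dyck path: every prefix has nonnegative height, and the final height is `0`. -/
def IsDyck (l : List Bool) : Prop :=
  (∀ pre, pre <+: l → 0 ≤ dsum pre) ∧ dsum l = 0


open Finset

def conv (f g : ℕ → ℕ) (n : ℕ) : ℕ := ∑ k ∈ range (n + 1), f k * g (n - k)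

lemma mk_conv (f g : ℕ → ℕ) :
    PowerSeries.mk (conv f g) = PowerSeries.mk f * PowerSeries.mk g := by
  ext n
  rw [PowerSeries.coeff_mk, PowerSeries.coeff_mul, conv]
  rw [Finset.Nat.sum_antidiagonal_eq_sum_range_succ
    (fun a b => (PowerSeries.coeff a) (PowerSeries.mk f) *
      (PowerSeries.coeff b) (PowerSeries.mk g))]
  simp

lemma conv_assoc (f g h : ℕ → ℕ) (n : ℕ) :
    conv (conv f g) h n = conv f (conv g h) n := by
  have h1 : PowerSeries.mk (conv (conv f g) h) = PowerSeries.mk (conv f (conv g h)) := by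
    rw [mk_conv, mk_conv, mk_conv, mk_conv, mul_assoc]
  have h2 := congrArg (PowerSeries.coeff (R := ℕ) n) h1
  simpa using h2

open Nat in
lemma lemD (m : ℕ) : centralBinom (m + 1) + 2 * catalan m = 4 * centralBinom m := by
  apply Nat.eq_of_mul_eq_mul_left (Nat.succ_pos m)
  have h1 := Nat.succ_mul_centralBinom_succ m
  have h2 := succ_mul_catalan_eq_centralBinom m
  calc (m + 1) * (centralBinom (m + 1) + 2 * catalan m)
      = (m + 1) * centralBinom (m + 1) + 2 * ((m + 1) * catalan m) := by ring
    _ = 2 * (2 * m + 1) * centralBinom m + 2 * centralBinom m := by rw [h1, h2]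
    _ = (m + 1) * (4 * centralBinom m) := by ring

/-- `t n = ∑ catalan k * centralBinom (n-k)`. -/
def tseq (n : ℕ) : ℕ := conv catalan Nat.centralBinom n

lemma catalan_succ_conv (k : ℕ) : catalan (k + 1) = conv catalan catalan k := by
  rw [catalan_succ']
  rw [Finset.Nat.sum_antidiagonal_eq_sum_range_succ (fun a b => catalan a * catalan b)]
  rfl

lemma lemR2 : ∀ n : ℕ, 2 * tseq n = Nat.centralBinom (n + 1) := by
  intro n
  induction n using Nat.strong_induction_on with
  | _ n IH =>
    match n with
    | 0 => simp [tseq, conv, Nat.centralBinom, Nat.choose]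
    | n + 1 =>
      have e0 : tseq (n + 1)
          = ∑ k ∈ range (n + 1), catalan (k + 1) * Nat.centralBinom (n - k)
            + Nat.centralBinom (n + 1) := by
        rw [tseq, conv, Finset.sum_range_succ']
        simp [catalan_zero]
      have e1 : ∑ k ∈ range (n + 1), catalan (k + 1) * Nat.centralBinom (n - k)
          = conv (conv catalan catalan) Nat.centralBinom n := by
        apply Finset.sum_congr rfl
        intro k _
        rw [catalan_succ_conv]
      have e2 : conv (conv catalan catalan) Nat.centralBinom n
          = ∑ p ∈ range (n + 1), catalan p * tseq (n - p) := by
        rw [conv_assoc]; rfl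
      have e3 : 2 * ∑ p ∈ range (n + 1), catalan p * tseq (n - p)
          = ∑ p ∈ range (n + 1), catalan p * Nat.centralBinom (n - p + 1) := by
        rw [Finset.mul_sum]
        apply Finset.sum_congr rfl
        intro p hp
        rw [← IH (n - p) (by omega)]
        ring
      have e4 : tseq (n + 1) = ∑ p ∈ range (n + 1), catalan p * Nat.centralBinom (n + 1 - p)
            + catalan (n + 1) := by
        rw [tseq, conv, Finset.sum_range_succ]
        simp
      have e5 : ∑ p ∈ range (n + 1), catalan p * Nat.centralBinom (n + 1 - p)
          = ∑ p ∈ range (n + 1), catalan p * Nat.centralBinom (n - p + 1) := by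
        apply Finset.sum_congr rfl
        intro p hp
        simp only [mem_range] at hp
        congr 2
        omega
      have hD := lemD (n + 1)
      omega

/-- `T n = ∑ catalan k * 4^(n-k)`. -/
def Tseq (n : ℕ) : ℕ := conv catalan (fun k => 4 ^ k) n

lemma lemT : ∀ n : ℕ, 2 * Tseq n + Nat.centralBinom (n + 1) = 4 ^ (n + 1) := by
  intro n
  induction n with
  | zero => simp [Tseq, conv, Nat.centralBinom, Nat.choose]
  | succ n IH =>
    have e1 : Tseq (n + 1) = 4 * Tseq n + catalan (n + 1) := by
      rw [Tseq, conv, Finset.sum_range_succ]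
      simp only [Nat.sub_self, pow_zero, mul_one]
      congr 1
      rw [Tseq, conv, Finset.mul_sum]
      apply Finset.sum_congr rfl
      intro k hk
      simp only [mem_range] at hk
      have : n + 1 - k = (n - k) + 1 := by omega
      rw [this, pow_succ]
      ring
    have hD := lemD (n + 1)
    have hp : (4:ℕ) ^ (n + 2) = 4 * 4 ^ (n + 1) := by ring
    omega

/-- Number of sequences of nonempty Dyck paths with total semilength `n`. -/
def Eseq : ℕ → ℕ
  | 0 => 1
  | n + 1 => ∑ k ∈ range (n + 1), catalan (k + 1) * Eseq (n - k)
decreasing_by exact Nat.lt_succ_of_le (Nat.sub_le n k)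

lemma twoE : ∀ n : ℕ, 2 * Eseq n = Nat.centralBinom n + (if n = 0 then 1 else 0) := by
  intro n
  induction n using Nat.strong_induction_on with
  | _ n IH =>
    match n with
    | 0 => simp [Eseq, Nat.centralBinom, Nat.choose]
    | n + 1 =>
      have e1 : 2 * Eseq (n + 1)
          = ∑ k ∈ range (n + 1), catalan (k + 1) * (2 * Eseq (n - k)) := by
        rw [Eseq, Finset.mul_sum]
        apply Finset.sum_congr rfl
        intro k _; ring
      have e2 : ∑ k ∈ range (n + 1), catalan (k + 1) * (2 * Eseq (n - k))
          = ∑ k ∈ range (n + 1), catalan (k + 1) * Nat.centralBinom (n - k)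
            + ∑ k ∈ range (n + 1), (if k = n then catalan (k + 1) else 0) := by
        rw [← Finset.sum_add_distrib]
        apply Finset.sum_congr rfl
        intro k hk
        simp only [mem_range] at hk
        rw [IH (n - k) (by omega)]
        by_cases h : k = n
        · subst h; simp; ring
        · have : ¬ (n - k = 0) := by omega
          simp [this, h]
      have e3 : ∑ k ∈ range (n + 1), (if k = n then catalan (k + 1) else 0)
          = catalan (n + 1) := by
        rw [Finset.sum_ite_eq' (range (n + 1)) n (fun k => catalan (k + 1))]
        simp
      have e4 : tseq (n + 1)
          = ∑ k ∈ range (n + 1), catalan (k + 1) * Nat.centralBinom (n - k)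
            + Nat.centralBinom (n + 1) := by
        rw [tseq, conv, Finset.sum_range_succ']
        simp
      have h2 := lemR2 (n + 1)
      have hD := lemD (n + 1)
      rw [if_neg (Nat.succ_ne_zero n), add_zero]
      linarith [e1, e2, e3, e4, h2, hD]

/-- `De j m`: number of sequences of `j` nonempty Dyck paths with total semilength `m`. -/
def De : ℕ → ℕ → ℕ
  | 0, m => if m = 0 then 1 else 0
  | j + 1, m => ∑ k ∈ range (m + 1), (if k = 0 then 0 else catalan k) * De j (m - k)

lemma De_eq_zero : ∀ j m : ℕ, m < j → De j m = 0 := by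
  intro j
  induction j with
  | zero => intro m h; omega
  | succ j IH =>
    intro m h
    rw [De]
    apply Finset.sum_eq_zero
    intro k hk
    simp only [mem_range] at hk
    by_cases h0 : k = 0
    · simp [h0]
    · rw [IH (m - k) (by omega), mul_zero]

lemma De_succ_eq (j m : ℕ) :
    De (j + 1) (m + 1) = ∑ k ∈ range (m + 1), catalan (k + 1) * De j (m - k) := by
  rw [De, Finset.sum_range_succ']
  simp

def SumD (m : ℕ) : ℕ := ∑ j ∈ range (m + 1), De j m
def SumJD (m : ℕ) : ℕ := ∑ j ∈ range (m + 1), j * De j m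

lemma SumD_succ (m : ℕ) :
    SumD (m + 1) = ∑ k ∈ range (m + 1), catalan (k + 1) * SumD (m - k) := by
  rw [SumD, Finset.sum_range_succ']
  have h0 : De 0 (m + 1) = 0 := by simp [De]
  rw [h0, add_zero]
  have e1 : ∀ j ∈ range (m + 1), De (j + 1) (m + 1)
      = ∑ k ∈ range (m + 1), catalan (k + 1) * De j (m - k) :=
    fun j _ => De_succ_eq j m
  rw [Finset.sum_congr rfl e1, Finset.sum_comm]
  apply Finset.sum_congr rfl
  intro k hk
  simp only [mem_range] at hk
  rw [← Finset.mul_sum]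
  congr 1
  rw [SumD]
  symm
  apply Finset.sum_subset
  · intro x hx; simp only [mem_range] at *; omega
  · intro x _ hx
    simp only [mem_range] at hx
    exact De_eq_zero x (m - k) (by omega)

lemma SumJD_succ (m : ℕ) :
    SumJD (m + 1) = ∑ k ∈ range (m + 1), catalan (k + 1) * (SumD (m - k) + SumJD (m - k)) := by
  rw [SumJD, Finset.sum_range_succ']
  simp only [zero_mul, add_zero]
  have e1 : ∀ j ∈ range (m + 1), (j + 1) * De (j + 1) (m + 1)
      = ∑ k ∈ range (m + 1), catalan (k + 1) * ((j + 1) * De j (m - k)) := by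
    intro j _
    rw [De_succ_eq, Finset.mul_sum]
    apply Finset.sum_congr rfl
    intro k _; ring
  rw [Finset.sum_congr rfl e1, Finset.sum_comm]
  apply Finset.sum_congr rfl
  intro k hk
  simp only [mem_range] at hk
  rw [← Finset.mul_sum]
  congr 1
  have trunc : ∑ j ∈ range (m + 1), (j + 1) * De j (m - k)
      = ∑ j ∈ range (m - k + 1), (j + 1) * De j (m - k) := by
    symm
    apply Finset.sum_subset
    · intro x hx; simp only [mem_range] at *; omega
    · intro x _ hx
      simp only [mem_range] at hx
      rw [De_eq_zero x (m - k) (by omega), mul_zero]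
  rw [trunc]
  rw [SumD, SumJD, ← Finset.sum_add_distrib]
  apply Finset.sum_congr rfl
  intro j _; ring

lemma SumD_eq_E : ∀ m : ℕ, SumD m = Eseq m := by
  intro m
  induction m using Nat.strong_induction_on with
  | _ m IH =>
    match m with
    | 0 => simp [SumD, De, Eseq]
    | m + 1 =>
      rw [SumD_succ, Eseq]
      apply Finset.sum_congr rfl
      intro k hk
      simp only [mem_range] at hk
      rw [IH (m - k) (by omega)]

lemma SumJD_zero : SumJD 0 = 0 := by simp [SumJD]

lemma SumJD_eq : ∀ m : ℕ, 1 ≤ m → SumJD m = 4 ^ (m - 1) := by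
  intro m
  induction m using Nat.strong_induction_on with
  | _ m IH =>
    match m with
    | 0 => omega
    | v + 1 =>
      intro _
      have e1 : SumJD (v + 1)
          = ∑ k ∈ range (v + 1), catalan (k + 1) * Eseq (v - k)
            + ∑ k ∈ range (v + 1), catalan (k + 1) * (if k = v then 0 else 4 ^ (v - k - 1)) := by
        rw [SumJD_succ, ← Finset.sum_add_distrib]
        apply Finset.sum_congr rfl
        intro k hk
        simp only [mem_range] at hk
        rw [SumD_eq_E, ← Nat.mul_add]
        congr 1
        by_cases h : k = v
        · subst h; simp [SumJD_zero]
        · rw [if_neg h, IH (v - k) (by omega) (by omega)]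
      have e2 : ∑ k ∈ range (v + 1), catalan (k + 1) * Eseq (v - k) = Eseq (v + 1) := by
        rw [Eseq]
      have e3 : ∑ k ∈ range (v + 1), catalan (k + 1) * (if k = v then 0 else 4 ^ (v - k - 1))
          = ∑ k ∈ range v, catalan (k + 1) * 4 ^ (v - k - 1) := by
        rw [Finset.sum_range_succ, if_pos rfl, mul_zero, add_zero]
        apply Finset.sum_congr rfl
        intro k hk
        simp only [mem_range] at hk
        rw [if_neg (by omega)]
      have e4 : Tseq v = ∑ k ∈ range v, catalan (k + 1) * 4 ^ (v - k - 1) + 4 ^ v := by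
        rw [Tseq, conv, Finset.sum_range_succ']
        simp only [catalan_zero, one_mul, Nat.sub_zero]
        simp [Nat.sub_sub]
      have h2 := twoE (v + 1)
      rw [if_neg (Nat.succ_ne_zero v), add_zero] at h2
      have hT := lemT v
      have hpow : (4:ℕ) ^ (v + 1) = 4 * 4 ^ v := by ring
      have goal4 : (4:ℕ) ^ (v + 1 - 1) = 4 ^ v := by simp
      rw [goal4, e1, e2, e3]
      linarith [h2, hT, hpow, e4]

open Finset

lemma dsum_eq_counts (l : List Bool) :
    dsum l = (l.count true : ℤ) - (l.count false : ℤ) := by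
  induction l with
  | nil => simp [dsum]
  | cons b l IH =>
    cases b <;> simp [dsum, dval, List.count_cons] at * <;> omega

lemma length_eq_counts (l : List Bool) : l.length = l.count true + l.count false := by
  induction l with
  | nil => rfl
  | cons b l IH =>
    cases b <;> simp only [List.count_cons, List.length_cons, IH] <;> simp <;> omega

/-- A Dyck word has even length, namely twice its `true` count. -/
lemma IsDyck.length_eq (l : List Bool) (h : IsDyck l) : l.length = 2 * l.count true := by
  have := h.2
  rw [dsum_eq_counts] at this
  have : l.count true = l.count false := by omega
  rw [length_eq_counts, this]
  omega

open DyckStep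

def toStep (b : Bool) : DyckStep := if b then U else D

def stepBool (s : DyckStep) : Bool := match s with | U => true | D => false

lemma toStep_stepBool (s : DyckStep) : toStep (stepBool s) = s := by cases s <;> rfl

lemma stepBool_toStep (b : Bool) : stepBool (toStep b) = b := by cases b <;> rfl

lemma toStep_injective : Function.Injective toStep := by
  intro a b h; cases a <;> cases b <;> simp [toStep] at h ⊢

lemma stepBool_injective : Function.Injective stepBool := by
  intro a b h; cases a <;> cases b <;> simp [stepBool] at h ⊢

lemma count_U_map (l : List Bool) : (l.map toStep).count U = l.count true :=
  List.count_map_of_injective l toStep toStep_injective true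

lemma count_D_map (l : List Bool) : (l.map toStep).count D = l.count false :=
  List.count_map_of_injective l toStep toStep_injective false

lemma count_true_map (L : List DyckStep) : (L.map stepBool).count true = L.count U :=
  List.count_map_of_injective L stepBool stepBool_injective U

lemma count_false_map (L : List DyckStep) : (L.map stepBool).count false = L.count D :=
  List.count_map_of_injective L stepBool stepBool_injective D

/-- The `DyckWord` associated to an `IsDyck` list. -/
def toDyckWord (l : List Bool) (hd : IsDyck l) : DyckWord where
  toList := l.map toStep
  count_U_eq_count_D := by
    rw [count_U_map, count_D_map]
    have := hd.2
    rw [dsum_eq_counts] at this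
    omega
  count_D_le_count_U := by
    intro i
    rw [← List.map_take, count_U_map, count_D_map]
    have hpre := hd.1 (l.take i) (List.take_prefix i l)
    rw [dsum_eq_counts] at hpre
    omega

lemma isDyck_of_dyckWord (p : DyckWord) : IsDyck (p.toList.map stepBool) := by
  constructor
  · intro pre hpre
    rw [List.prefix_iff_eq_take] at hpre
    rw [hpre, ← List.map_take, dsum_eq_counts, count_true_map, count_false_map]
    have := p.count_D_le_count_U pre.length
    omega
  · rw [dsum_eq_counts, count_true_map, count_false_map, p.count_U_eq_count_D]
    omega

/-- The equivalence between `IsDyck` lists of length `2*m` and `DyckWord`s of semilength `m`. -/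
def dyckEquiv (m : ℕ) :
    {l : List Bool // IsDyck l ∧ l.length = 2 * m} ≃ {p : DyckWord // p.semilength = m} where
  toFun := fun x =>
    ⟨toDyckWord x.1 x.2.1, by
      show (x.1.map toStep).count U = m
      rw [count_U_map]
      have := IsDyck.length_eq x.1 x.2.1
      have := x.2.2
      omega⟩
  invFun := fun x =>
    ⟨x.1.toList.map stepBool, isDyck_of_dyckWord x.1, by
      rw [List.length_map, ← x.1.two_mul_semilength_eq_length, x.2]⟩
  left_inv := fun x => by
    apply Subtype.ext
    show (x.1.map toStep).map stepBool = x.1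
    rw [List.map_map]
    have h : stepBool ∘ toStep = id := funext stepBool_toStep
    rw [h, List.map_id]
  right_inv := fun x => by
    apply Subtype.ext
    apply DyckWord.ext
    show (x.1.toList.map stepBool).map toStep = x.1.toList
    rw [List.map_map]
    have h : toStep ∘ stepBool = id := funext toStep_stepBool
    rw [h, List.map_id]

lemma card_isDyck (m : ℕ) :
    Nat.card {l : List Bool // IsDyck l ∧ l.length = 2 * m} = catalan m := by
  rw [Nat.card_congr (dyckEquiv m), Nat.card_eq_fintype_card,
    DyckWord.card_dyckWord_semilength_eq_catalan]

/-- With nonemptiness and a fixed length. -/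
noncomputable def dcount (s : ℕ) : ℕ := Nat.card {l : List Bool // (IsDyck l ∧ l ≠ []) ∧ l.length = s}

instance finite_list_pred (P : List Bool → Prop) (s : ℕ) :
    Finite {l : List Bool // P l ∧ l.length = s} := by
  have hfin : Finite {l : List Bool // l.length = s} :=
    (List.finite_length_eq Bool s).to_subtype
  apply Finite.of_injective
    (fun x : {l : List Bool // P l ∧ l.length = s} => (⟨x.1, x.2.2⟩ : {l : List Bool // l.length = s}))
  intro a b h
  simp only [Subtype.mk.injEq] at h
  exact Subtype.ext h

lemma dcount_even (k : ℕ) : dcount (2 * k) = if k = 0 then 0 else catalan k := by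
  rcases Nat.eq_zero_or_pos k with hk | hk
  · subst hk
    rw [if_pos rfl, dcount]
    have : IsEmpty {l : List Bool // (IsDyck l ∧ l ≠ []) ∧ l.length = 2 * 0} := by
      constructor
      rintro ⟨l, ⟨_, hne⟩, hlen⟩
      exact hne (List.eq_nil_of_length_eq_zero (by omega))
    exact Nat.card_of_isEmpty
  · rw [if_neg (by omega), dcount]
    rw [Nat.card_congr (Equiv.subtypeEquivRight (q := fun l => IsDyck l ∧ l.length = 2 * k) ?_)]
    · exact card_isDyck k
    · intro l
      constructor
      · rintro ⟨⟨h1, _⟩, h2⟩; exact ⟨h1, h2⟩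
      · rintro ⟨h1, h2⟩
        refine ⟨⟨h1, ?_⟩, h2⟩
        intro hnil
        rw [hnil] at h2
        simp at h2
        omega

lemma dcount_odd (s : ℕ) (h : ¬ 2 ∣ s) : dcount s = 0 := by
  rw [dcount]
  have : IsEmpty {l : List Bool // (IsDyck l ∧ l ≠ []) ∧ l.length = s} := by
    constructor
    rintro ⟨l, ⟨hd, _⟩, hlen⟩
    exact h ⟨l.count true, by rw [← hlen, IsDyck.length_eq l hd]⟩
  exact Nat.card_of_isEmpty

lemma natCard_sigma {ι : Type*} [Fintype ι] (A : ι → Type*) [∀ i, Finite (A i)] :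
    Nat.card (Σ i, A i) = ∑ i, Nat.card (A i) := by
  letI : ∀ i, Fintype (A i) := fun i => Fintype.ofFinite (A i)
  simp [Nat.card_eq_fintype_card]

/-- Counting a product cut by the sum of two weights. -/
lemma card_weighted_prod {α β : Type*} (u : α → ℕ) (v : β → ℕ)
    (hu : ∀ k, Finite {a : α // u a = k}) (hv : ∀ k, Finite {b : β // v b = k}) (n : ℕ) :
    Nat.card {p : α × β // u p.1 + v p.2 = n}
      = ∑ k ∈ Finset.range (n + 1), Nat.card {a : α // u a = k} * Nat.card {b : β // v b = n - k} := by
  have e : {p : α × β // u p.1 + v p.2 = n}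
      ≃ Σ k : Fin (n + 1), {a : α // u a = k.1} × {b : β // v b = n - k.1} := by
    refine ⟨fun p => ⟨⟨u p.1.1, by omega⟩, ⟨p.1.1, rfl⟩, ⟨p.1.2, by
        have := p.2
        show v p.1.2 = n - u p.1.1
        omega⟩⟩,
      fun x => ⟨(x.2.1.1, x.2.2.1), by
        have h1 := x.2.1.2
        have h2 := x.2.2.2
        have h3 : (x.1 : ℕ) < n + 1 := x.1.2
        show u x.2.1.1 + v x.2.2.1 = n
        omega⟩, ?_, ?_⟩
    · rintro ⟨⟨a, b⟩, hp⟩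
      rfl
    · rintro ⟨⟨kv, hk⟩, ⟨a, ha⟩, ⟨b, hb⟩⟩
      dsimp at ha hb ⊢
      subst ha
      rfl
  rw [Nat.card_congr e]
  haveI : ∀ k : Fin (n + 1), Finite ({a : α // u a = k.1} × {b : β // v b = n - k.1}) := by
    intro k
    haveI := hu k.1
    haveI := hv (n - k.1)
    infer_instance
  rw [natCard_sigma]
  rw [Fin.sum_univ_eq_sum_range (fun k => Nat.card ({a : α // u a = k} × {b : β // v b = n - k}))]
  apply Finset.sum_congr rfl
  intro k _
  exact Nat.card_prod _ _

/-- Count of tuples of nonempty Dyck paths with given total length. -/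
noncomputable def pcount (j n : ℕ) : ℕ :=
  Nat.card {f : Fin j → List Bool // (∀ r, IsDyck (f r) ∧ f r ≠ []) ∧ ∑ r, (f r).length = n}

lemma finite_pi (j n : ℕ) (P : (Fin j → List Bool) → Prop) :
    Finite {f : Fin j → List Bool // P f ∧ ∑ r, (f r).length = n} := by
  haveI : Finite {l : List Bool // l.length ≤ n} := (List.finite_length_le Bool n).to_subtype
  haveI : Finite (Fin j → {l : List Bool // l.length ≤ n}) := inferInstance
  apply Finite.of_injective (fun x : {f : Fin j → List Bool // P f ∧ ∑ r, (f r).length = n} =>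
    (fun r => ⟨x.1 r, by
      have h1 : (x.1 r).length ≤ ∑ s, (x.1 s).length :=
        Finset.single_le_sum (f := fun s => (x.1 s).length) (fun s _ => Nat.zero_le _)
          (Finset.mem_univ r)
      omega⟩ : Fin j → {l : List Bool // l.length ≤ n}))
  intro a b h
  apply Subtype.ext
  funext r
  have := congrFun h r
  simpa [Subtype.mk.injEq] using this

lemma pcount_zero (n : ℕ) : pcount 0 n = if n = 0 then 1 else 0 := by
  rcases Nat.eq_zero_or_pos n with hn | hn
  · subst hn
    rw [if_pos rfl, pcount]
    haveI : Unique {f : Fin 0 → List Bool // (∀ r, IsDyck (f r) ∧ f r ≠ []) ∧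
        ∑ r, (f r).length = 0} := by
      refine ⟨⟨⟨Fin.elim0, fun r => r.elim0, by simp⟩⟩, ?_⟩
      rintro ⟨f, hf⟩
      apply Subtype.ext
      funext r
      exact r.elim0
    exact Nat.card_unique
  · rw [if_neg (by omega), pcount]
    have : IsEmpty {f : Fin 0 → List Bool // (∀ r, IsDyck (f r) ∧ f r ≠ []) ∧
        ∑ r, (f r).length = n} := by
      constructor
      rintro ⟨f, _, hs⟩
      simp at hs
      omega
    exact Nat.card_of_isEmpty

section PcountSucc

variable (j n : ℕ)

private abbrev GoodT := {l : List Bool // IsDyck l ∧ l ≠ []}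
private abbrev TupT (j : ℕ) := {f : Fin j → List Bool // ∀ r, IsDyck (f r) ∧ f r ≠ []}

/-- Peeling off the first component of a `(j+1)`-tuple. -/
def peelEquiv (j n : ℕ) :
    {f : Fin (j + 1) → List Bool // (∀ r, IsDyck (f r) ∧ f r ≠ []) ∧ ∑ r, (f r).length = n}
      ≃ {p : GoodT × TupT j // p.1.1.length + ∑ r, (p.2.1 r).length = n} where
  toFun := fun x =>
    ⟨(⟨x.1 0, x.2.1 0⟩, ⟨Fin.tail x.1, fun r => x.2.1 r.succ⟩), by
      have hs := x.2.2
      rw [Fin.sum_univ_succ] at hs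
      exact hs⟩
  invFun := fun p =>
    ⟨Fin.cons p.1.1.1 p.1.2.1, ⟨by
      intro r
      refine Fin.cases ?_ ?_ r
      · rw [Fin.cons_zero]; exact p.1.1.2
      · intro s; rw [Fin.cons_succ]; exact p.1.2.2 s, by
      rw [Fin.sum_univ_succ]
      simpa using p.2⟩⟩
  left_inv := fun x => by
    apply Subtype.ext
    exact Fin.cons_self_tail x.1
  right_inv := fun p => by
    apply Subtype.ext
    apply Prod.ext
    · apply Subtype.ext
      simp
    · apply Subtype.ext
      funext r
      simp [Fin.tail_cons]

lemma pcount_succ :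
    pcount (j + 1) n = ∑ k ∈ Finset.range (n + 1), dcount k * pcount j (n - k) := by
  rw [pcount, Nat.card_congr (peelEquiv j n)]
  have hu : ∀ k, Finite {a : GoodT // a.1.length = k} := by
    intro k
    apply Finite.of_injective (fun x : {a : GoodT // a.1.length = k} =>
      (⟨x.1.1, x.1.2, x.2⟩ : {l : List Bool // (IsDyck l ∧ l ≠ []) ∧ l.length = k}))
    intro a b h
    simp only [Subtype.mk.injEq] at h
    exact Subtype.ext (Subtype.ext h)
  have hv : ∀ k, Finite {b : TupT j // ∑ r, (b.1 r).length = k} := by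
    intro k
    haveI := finite_pi j k (fun f => ∀ r, IsDyck (f r) ∧ f r ≠ [])
    apply Finite.of_injective (fun x : {b : TupT j // ∑ r, (b.1 r).length = k} =>
      (⟨x.1.1, x.1.2, x.2⟩ :
        {f : Fin j → List Bool // (∀ r, IsDyck (f r) ∧ f r ≠ []) ∧ ∑ r, (f r).length = k}))
    intro a b h
    simp only [Subtype.mk.injEq] at h
    exact Subtype.ext (Subtype.ext h)
  rw [card_weighted_prod (fun a : GoodT => a.1.length) (fun b : TupT j => ∑ r, (b.1 r).length)
    hu hv n]
  apply Finset.sum_congr rfl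
  intro k _
  congr 1
  · rw [dcount]
    apply Nat.card_congr
    refine ⟨fun x => ⟨x.1.1, ⟨x.1.2, x.2⟩⟩, fun y => ⟨⟨y.1, y.2.1⟩, y.2.2⟩, ?_, ?_⟩
    · rintro ⟨⟨l, hl⟩, hs⟩; rfl
    · rintro ⟨l, hl, hs⟩; rfl
  · rw [pcount]
    apply Nat.card_congr
    refine ⟨fun x => ⟨x.1.1, ⟨x.1.2, x.2⟩⟩, fun y => ⟨⟨y.1, y.2.1⟩, y.2.2⟩, ?_, ?_⟩
    · rintro ⟨⟨f, hf⟩, hs⟩; rfl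
    · rintro ⟨f, hf, hs⟩; rfl

end PcountSucc

lemma sum_even_support (g : ℕ → ℕ) (h : ∀ s, ¬ 2 ∣ s → g s = 0) :
    ∀ m : ℕ, ∑ s ∈ Finset.range (2 * m + 1), g s = ∑ k ∈ Finset.range (m + 1), g (2 * k) := by
  intro m
  induction m with
  | zero => simp
  | succ m IH =>
    have e1 : 2 * (m + 1) + 1 = (2 * m + 1) + 1 + 1 := by omega
    rw [e1, Finset.sum_range_succ, Finset.sum_range_succ, IH,
      Finset.sum_range_succ (fun k => g (2 * k)) (m + 1)]
    rw [h (2 * m + 1) (by omega)]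
    have : 2 * m + 1 + 1 = 2 * (m + 1) := by omega
    rw [this]
    omega

lemma two_dvd_sub (n k : ℕ) (h1 : 2 ∣ n) (h2 : 2 ∣ k) : 2 ∣ (n - k) := by omega

lemma pcount_eq_De : ∀ j n : ℕ, pcount j n = if 2 ∣ n then De j (n / 2) else 0 := by
  intro j
  induction j with
  | zero =>
    intro n
    rw [pcount_zero]
    by_cases h2 : 2 ∣ n
    · rw [if_pos h2]
      by_cases h0 : n = 0
      · subst h0; simp [De]
      · rw [if_neg h0]
        have : ¬ (n / 2 = 0) := by omega
        simp [De, this]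
    · rw [if_neg h2, if_neg (by omega)]
  | succ j IH =>
    intro n
    rw [pcount_succ]
    by_cases h2 : 2 ∣ n
    · rw [if_pos h2]
      obtain ⟨m, rfl⟩ := h2
      have e0 : ∑ k ∈ Finset.range (2 * m + 1), dcount k * pcount j (2 * m - k)
          = ∑ k ∈ Finset.range (m + 1), dcount (2 * k) * pcount j (2 * m - 2 * k) := by
        apply sum_even_support (fun k => dcount k * pcount j (2 * m - k))
        intro s hs
        rw [dcount_odd s hs, zero_mul]
      rw [e0]
      have e1 : (2 * m) / 2 = m := by omega
      rw [e1, De]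
      apply Finset.sum_congr rfl
      intro k hk
      simp only [Finset.mem_range] at hk
      rw [dcount_even, IH]
      have hdvd : 2 ∣ (2 * m - 2 * k) := by omega
      rw [if_pos hdvd]
      have : (2 * m - 2 * k) / 2 = m - k := by omega
      rw [this]
    · rw [if_neg h2]
      apply Finset.sum_eq_zero
      intro k hk
      simp only [Finset.mem_range] at hk
      by_cases hke : 2 ∣ k
      · rw [IH, if_neg (by omega), mul_zero]
      · rw [dcount_odd k hke, zero_mul]

section Main

variable (i : ℕ)

/-- The truncated indexed form of the main type. -/
def mainEquiv (i : ℕ) :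
    {x : Σ j : ℕ, (Fin j → List Bool) × Fin j //
        (∀ r, IsDyck (x.2.1 r) ∧ x.2.1 r ≠ []) ∧ ∑ r, (x.2.1 r).length = 2 * i}
      ≃ Σ j : Fin (2 * i + 2),
          ({f : Fin j.1 → List Bool // (∀ r, IsDyck (f r) ∧ f r ≠ []) ∧
              ∑ r, (f r).length = 2 * i} × Fin j.1) where
  toFun := fun x =>
    ⟨⟨x.1.1, by
      have hle : ∀ r : Fin x.1.1, 1 ≤ (x.1.2.1 r).length := by
        intro r
        have := (x.2.1 r).2
        cases h : x.1.2.1 r with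
        | nil => exact absurd h this
        | cons a l => simp
      have h1 : ∑ r : Fin x.1.1, 1 ≤ ∑ r, (x.1.2.1 r).length :=
        Finset.sum_le_sum (fun r _ => hle r)
      have h2 := x.2.2
      simp only [Finset.sum_const, Finset.card_univ, Fintype.card_fin, smul_eq_mul,
        mul_one] at h1
      omega⟩, ⟨x.1.2.1, x.2⟩, x.1.2.2⟩
  invFun := fun y => ⟨⟨y.1.1, y.2.1.1, y.2.2⟩, y.2.1.2⟩
  left_inv := fun x => rfl
  right_inv := fun y => rfl

theorem main_card (hi : 1 ≤ i) :
    Nat.card {x : Σ j : ℕ, (Fin j → List Bool) × Fin j //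
        (∀ r, IsDyck (x.2.1 r) ∧ x.2.1 r ≠ []) ∧ ∑ r, (x.2.1 r).length = 2 * i}
      = 4 ^ (i - 1) := by
  rw [Nat.card_congr (mainEquiv i)]
  haveI : ∀ j : Fin (2 * i + 2),
      Finite ({f : Fin j.1 → List Bool // (∀ r, IsDyck (f r) ∧ f r ≠ []) ∧
        ∑ r, (f r).length = 2 * i} × Fin j.1) := by
    intro j
    haveI := finite_pi j.1 (2 * i) (fun f => ∀ r, IsDyck (f r) ∧ f r ≠ [])
    infer_instance
  rw [natCard_sigma]
  have e1 : ∀ j : Fin (2 * i + 2),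
      Nat.card ({f : Fin j.1 → List Bool // (∀ r, IsDyck (f r) ∧ f r ≠ []) ∧
          ∑ r, (f r).length = 2 * i} × Fin j.1) = pcount j.1 (2 * i) * j.1 := by
    intro j
    rw [Nat.card_prod, pcount]
    congr 1
    simp
  rw [Finset.sum_congr rfl (fun j _ => e1 j)]
  rw [Fin.sum_univ_eq_sum_range (fun j => pcount j (2 * i) * j)]
  have e2 : ∀ j, pcount j (2 * i) = De j i := by
    intro j
    rw [pcount_eq_De, if_pos ⟨i, rfl⟩]
    congr 1
    omega
  rw [Finset.sum_congr rfl (fun j _ => by rw [e2 j])]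
  have e3 : ∑ j ∈ Finset.range (2 * i + 2), De j i * j
      = ∑ j ∈ Finset.range (i + 1), j * De j i := by
    rw [← Finset.sum_subset (Finset.range_subset_range.mpr (by omega : i + 1 ≤ 2 * i + 2))]
    · apply Finset.sum_congr rfl
      intro j _
      ring
    · intro x _ hx
      simp only [Finset.mem_range] at hx
      rw [De_eq_zero x i (by omega), zero_mul]
  rw [e3, ← SumJD]
  exact SumJD_eq i hi

end Main

/-- The number of rooted compositions of Dyck paths of length `2i` — compositions
`(P₁, …, P_j)` into nonempty Dyck segments together with a distinguished segment —
equals `4^{i-1}`. -/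
theorem stmt_15 (i : ℕ) (hi : 1 ≤ i) :
    Nat.card {x : Σ j : ℕ, (Fin j → List Bool) × Fin j //
        (∀ r, IsDyck (x.2.1 r) ∧ x.2.1 r ≠ []) ∧ ∑ r, (x.2.1 r).length = 2 * i} =
      4 ^ (i - 1) := by
  exact main_card i hi
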